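/- Let L be a nilpotent real Lie algebra of finite dimension n with n ≥ 3, and suppose L admits a symmetric, invariant, non-degenerate bilinear form. Then the nilpotency index of L is at most n − 2; that is, the (n−2)-th term of the lower central series of L vanishes, where the lower central series is defined by C⁰L = L and C^{k+1}L = ⁅L, C^kL⁆. -/

import Mathlib

open LieModule Module

section Aux

variable (L : Type*) [LieRing L] [LieAlgebra ℝ L]

/-- Auxiliary ascending "annihilator" series, defined as plain submodules:
`Zaux 0 = ⊥`, `Zaux (k+1) = {x | ∀ y, ⁅x, y⁆ ∈ Zaux k}`. -/
noncomputable def Zaux : ℕ → Submodule ℝ L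
  | 0 => ⊥
  | k + 1 => ⨅ y : L, (Zaux k).comap
      ({ toFun := fun x => ⁅x, y⁆
         map_add' := fun a b => add_lie a b y
         map_smul' := fun r a => smul_lie r a y } : L →ₗ[ℝ] L)

lemma mem_Zaux_succ {k : ℕ} {x : L} :
    x ∈ Zaux L (k + 1) ↔ ∀ y : L, ⁅x, y⁆ ∈ Zaux L k := by
  simp [Zaux, Submodule.mem_iInf]

lemma Zaux_zero : Zaux L 0 = ⊥ := rfl

variable {L}

lemma lie_mem_Zaux_of_right {k : ℕ} {z : L} (hz : z ∈ Zaux L (k + 1)) (y : L) :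
    ⁅y, z⁆ ∈ Zaux L k := by
  rw [← lie_skew]
  exact neg_mem ((mem_Zaux_succ L).1 hz y)

/-- If the lower central series stabilizes at step `k`, then (by nilpotency) it is `⊥` there. -/
lemma lcs_eq_bot_of_stab [LieRing.IsNilpotent L] {k : ℕ}
    (h : lowerCentralSeries ℝ L L (k + 1) = lowerCentralSeries ℝ L L k) :
    lowerCentralSeries ℝ L L k = ⊥ := by
  obtain ⟨m, hm⟩ := LieModule.IsNilpotent.nilpotent ℝ L L
  have key : ∀ j, lowerCentralSeries ℝ L L (k + j) = lowerCentralSeries ℝ L L k := by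
    intro j
    induction j with
    | zero => rfl
    | succ j ih =>
        have : k + (j + 1) = (k + j) + 1 := rfl
        rw [this, LieModule.lowerCentralSeries_succ, ih, ← LieModule.lowerCentralSeries_succ, h]
  refine le_antisymm ?_ bot_le
  calc lowerCentralSeries ℝ L L k = lowerCentralSeries ℝ L L (k + m) := (key m).symm
    _ ≤ lowerCentralSeries ℝ L L m := antitone_lowerCentralSeries ℝ L L (Nat.le_add_left m k)
    _ = ⊥ := hm

/-- If `W` has codimension at most one (witnessed by `x` with `W ⊔ span {x} = ⊤`) and all
brackets with left entry in `W` lie in a submodule `T`, then the derived algebra lies in `T`. -/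
lemma derived_le_of_codim_one (W T : Submodule ℝ L) (x : L)
    (hx : W ⊔ Submodule.span ℝ {x} = ⊤)
    (h : ∀ z ∈ W, ∀ y : L, ⁅z, y⁆ ∈ T) :
    LieSubmodule.toSubmodule (lowerCentralSeries ℝ L L 1) ≤ T := by
  have h1 : lowerCentralSeries ℝ L L 1 = ⁅(⊤ : LieIdeal ℝ L), (⊤ : LieSubmodule ℝ L L)⁆ := by
    rw [show (1 : ℕ) = 0 + 1 from rfl, LieModule.lowerCentralSeries_succ, LieModule.lowerCentralSeries_zero]
  rw [h1, LieSubmodule.lieIdeal_oper_eq_linear_span']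
  refine Submodule.span_le.2 ?_
  rintro m ⟨a, -, b, -, rfl⟩
  have ha : a ∈ W ⊔ Submodule.span ℝ {x} := hx ▸ Submodule.mem_top
  have hb : b ∈ W ⊔ Submodule.span ℝ {x} := hx ▸ Submodule.mem_top
  obtain ⟨z, hz, a', ha', rfl⟩ := Submodule.mem_sup.1 ha
  obtain ⟨z', hz', b', hb', rfl⟩ := Submodule.mem_sup.1 hb
  obtain ⟨r, rfl⟩ := Submodule.mem_span_singleton.1 ha'
  obtain ⟨s, rfl⟩ := Submodule.mem_span_singleton.1 hb'
  have e : ⁅z + r • x, z' + s • x⁆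
      = ⁅z, z'⁆ + s • ⁅z, x⁆ + r • (-⁅z', x⁆) := by
    have hxz : ⁅x, z'⁆ = -⁅z', x⁆ := (lie_skew x z').symm ▸ rfl
    simp only [add_lie, lie_add, smul_lie, lie_smul, lie_self, smul_zero, add_zero, lie_skew]
    module
  rw [e]
  exact T.add_mem (T.add_mem (h z hz z') (T.smul_mem _ (h z hz x)))
    (T.smul_mem _ (neg_mem (h z' hz' x)))

/-- A submodule of dimension at least `n - 1` admits a single vector completing it to `⊤`. -/
lemma exists_sup_span_eq_top [FiniteDimensional ℝ L] (W : Submodule ℝ L)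
    (hW : finrank ℝ L ≤ finrank ℝ W + 1) :
    ∃ x : L, W ⊔ Submodule.span ℝ {x} = ⊤ := by
  rcases eq_or_ne W ⊤ with h | h
  · exact ⟨0, by simp [h]⟩
  · obtain ⟨x, -, hxW⟩ := SetLike.exists_of_lt h.lt_top
    refine ⟨x, ?_⟩
    have hlt : W < W ⊔ Submodule.span ℝ {x} := by
      refine lt_of_le_of_ne le_sup_left fun he => hxW ?_
      rw [he]
      exact Submodule.mem_sup_right (Submodule.mem_span_singleton_self x)
    have h1 : finrank ℝ W < finrank ℝ (W ⊔ Submodule.span ℝ {x} : Submodule ℝ L) :=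
      Submodule.finrank_lt_finrank_of_lt hlt
    have h2 : finrank ℝ (W ⊔ Submodule.span ℝ {x} : Submodule ℝ L) ≤ finrank ℝ L :=
      Submodule.finrank_le _
    exact Submodule.eq_top_of_finrank_eq (le_antisymm h2 (by omega))

end Aux

/-- A nilpotent real Lie algebra `L` of finite dimension `n ≥ 3` admitting a
symmetric, invariant, non-degenerate bilinear form has nilpotency index at most `n - 2`: the
`(n-2)`-th term of its lower central series (with `C⁰L = L`, `C^{k+1}L = ⁅L, C^kL⁆`) vanishes. -/
theorem nilindex_le_of_quasiClassical
    (L : Type*) [LieRing L] [LieAlgebra ℝ L] [FiniteDimensional ℝ L]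
    [LieRing.IsNilpotent L]
    (hn : 3 ≤ Module.finrank ℝ L)
    (B : L →ₗ[ℝ] L →ₗ[ℝ] ℝ)
    (hsymm : ∀ x y, B x y = B y x)
    (hinv : ∀ x y z, B ⁅x, y⁆ z = B x ⁅y, z⁆)
    (hnondeg : ∀ x, (∀ y, B x y = 0) → x = 0) :
    LieModule.lowerCentralSeries ℝ L L (Module.finrank ℝ L - 2) = ⊥ := by
  classical
  set n := Module.finrank ℝ L with hn'
  by_contra hbot
  -- every term of the series up to `n - 2` is nonzero
  have hne : ∀ k, k ≤ n - 2 → lowerCentralSeries ℝ L L k ≠ ⊥ := by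
    intro k hk h
    exact hbot (le_antisymm (h ▸ antitone_lowerCentralSeries ℝ L L hk) bot_le)
  -- the series is strictly decreasing in dimension up to `n - 2`
  have hstrict : ∀ k, k + 1 ≤ n - 2 →
      finrank ℝ ↥(LieSubmodule.toSubmodule (lowerCentralSeries ℝ L L (k + 1)))
        < finrank ℝ ↥(LieSubmodule.toSubmodule (lowerCentralSeries ℝ L L k)) := by
    intro k hk
    apply Submodule.finrank_lt_finrank_of_lt
    have hle : lowerCentralSeries ℝ L L (k + 1) ≤ lowerCentralSeries ℝ L L k :=
      antitone_lowerCentralSeries ℝ L L (Nat.le_succ k)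
    refine lt_of_le_of_ne hle ?_
    intro hEq
    have hEq' : lowerCentralSeries ℝ L L (k + 1) = lowerCentralSeries ℝ L L k :=
      (LieSubmodule.toSubmodule_inj _ _).1 hEq
    exact hne k (le_trans (Nat.le_succ k) hk) (lcs_eq_bot_of_stab hEq')
  -- the derived algebra has codimension at least 2
  have hd1 : finrank ℝ ↥(LieSubmodule.toSubmodule (lowerCentralSeries ℝ L L 1))
      + 2 ≤ n := by
    by_contra hcon
    push_neg at hcon
    obtain ⟨x, hx⟩ := exists_sup_span_eq_top
      (LieSubmodule.toSubmodule (lowerCentralSeries ℝ L L 1)) (by omega)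
    have hsub : LieSubmodule.toSubmodule (lowerCentralSeries ℝ L L 1)
        ≤ LieSubmodule.toSubmodule (lowerCentralSeries ℝ L L 2) := by
      refine derived_le_of_codim_one _ _ x hx ?_
      intro z hz y
      have : ⁅y, z⁆ ∈ lowerCentralSeries ℝ L L 2 := by
        rw [show (2 : ℕ) = 1 + 1 from rfl, LieModule.lowerCentralSeries_succ]
        exact LieSubmodule.lie_mem_lie (LieSubmodule.mem_top y) hz
      rw [← lie_skew]
      exact neg_mem this
    have hEq : lowerCentralSeries ℝ L L 2 = lowerCentralSeries ℝ L L 1 :=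
      (LieSubmodule.toSubmodule_inj _ _).1
        (le_antisymm (antitone_lowerCentralSeries ℝ L L (Nat.le_succ 1)) hsub)
    exact hne 1 (by omega) (lcs_eq_bot_of_stab (k := 1) hEq)
  -- dimension count along the strictly decreasing chain
  have chain : ∀ j, j ≤ n - 3 →
      finrank ℝ ↥(LieSubmodule.toSubmodule (lowerCentralSeries ℝ L L (n - 2))) + j
        ≤ finrank ℝ ↥(LieSubmodule.toSubmodule (lowerCentralSeries ℝ L L (n - 2 - j))) := by
    intro j
    induction j with
    | zero => simp
    | succ j ih =>
        intro hj
        have h1 := ih (by omega)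
        have e : n - 2 - j = (n - 2 - (j + 1)) + 1 := by omega
        have h2 := hstrict (n - 2 - (j + 1)) (by omega)
        rw [← e] at h2
        omega
  have hlast : finrank ℝ ↥(LieSubmodule.toSubmodule (lowerCentralSeries ℝ L L (n - 2))) ≤ 1 := by
    have h1 := chain (n - 3) le_rfl
    have e : n - 2 - (n - 3) = 1 := by omega
    rw [e] at h1
    omega
  -- the annihilator series dominates the orthogonal complements of the lower central series
  have perp : ∀ k, ∀ x : L,
      (∀ c, c ∈ lowerCentralSeries ℝ L L k → B x c = 0) → x ∈ Zaux L k := by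
    intro k
    induction k with
    | zero =>
        intro x hx
        have : x = 0 := hnondeg x fun y => hx y (by simp [LieModule.lowerCentralSeries_zero])
        rw [Zaux_zero, this]
        exact Submodule.zero_mem _
    | succ k ih =>
        intro x hx
        rw [mem_Zaux_succ]
        intro y
        apply ih
        intro c hc
        rw [hinv x y c]
        exact hx _ (by
          rw [LieModule.lowerCentralSeries_succ]
          exact LieSubmodule.lie_mem_lie (LieSubmodule.mem_top y) hc)
  -- hence `Zaux (n-2)` has codimension at most 1
  set S : Submodule ℝ L :=
    LieSubmodule.toSubmodule (lowerCentralSeries ℝ L L (n - 2)) with hS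
  have hZdim : n ≤ finrank ℝ (Zaux L (n - 2)) + 1 := by
    set f : L →ₗ[ℝ] (S →ₗ[ℝ] ℝ) := B.compl₂ S.subtype with hf
    have hker : LinearMap.ker f ≤ Zaux L (n - 2) := by
      intro x hx
      apply perp (n - 2) x
      intro c hc
      have h0 : f x = 0 := hx
      have := congrArg (fun g => g ⟨c, hc⟩) h0
      simpa [hf, LinearMap.compl₂_apply] using this
    have h1 := LinearMap.finrank_range_add_finrank_ker f
    have h2 : finrank ℝ (LinearMap.range f) ≤ finrank ℝ (S →ₗ[ℝ] ℝ) :=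
      Submodule.finrank_le _
    have h3 : finrank ℝ (S →ₗ[ℝ] ℝ) = finrank ℝ S := Subspace.dual_finrank_eq
    have h4 : finrank ℝ (LinearMap.ker f) ≤ finrank ℝ (Zaux L (n - 2)) :=
      Submodule.finrank_mono hker
    omega
  -- pick a vector completing `Zaux (n-2)` to the whole space
  obtain ⟨x, hx⟩ := exists_sup_span_eq_top (Zaux L (n - 2)) (by omega)
  have hC1 : LieSubmodule.toSubmodule (lowerCentralSeries ℝ L L 1)
      ≤ Zaux L (n - 3) := by
    refine derived_le_of_codim_one _ _ x hx ?_
    intro z hz y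
    have e : n - 2 = (n - 3) + 1 := by omega
    rw [e] at hz
    exact (mem_Zaux_succ L).1 hz y
  -- push the inclusion down the series
  have hE : ∀ j, j ≤ n - 3 →
      LieSubmodule.toSubmodule (lowerCentralSeries ℝ L L (1 + j))
        ≤ Zaux L (n - 3 - j) := by
    intro j
    induction j with
    | zero => simpa using hC1
    | succ j ih =>
        intro hj
        have ih' := ih (by omega)
        have hstep : lowerCentralSeries ℝ L L (1 + (j + 1))
            = ⁅(⊤ : LieIdeal ℝ L), lowerCentralSeries ℝ L L (1 + j)⁆ := by
          rw [show 1 + (j + 1) = (1 + j) + 1 from rfl, LieModule.lowerCentralSeries_succ]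
        rw [hstep, LieSubmodule.lieIdeal_oper_eq_linear_span']
        refine Submodule.span_le.2 ?_
        rintro m ⟨y, -, c, hc, rfl⟩
        have hcZ : c ∈ Zaux L (n - 3 - j) := ih' hc
        have e : n - 3 - j = (n - 3 - (j + 1)) + 1 := by omega
        rw [e] at hcZ
        exact lie_mem_Zaux_of_right hcZ y
  have hfin := hE (n - 3) le_rfl
  have e : 1 + (n - 3) = n - 2 := by omega
  rw [e] at hfin
  apply hbot
  rw [eq_bot_iff]
  intro m hm
  have : m ∈ Zaux L (n - 3 - (n - 3)) := hfin hm
  rw [Nat.sub_self, Zaux_zero] at this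
  simpa using this
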